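/- The generating function P(x) = Σ_{n≥0} a(n) x^n, where a(n) is the number of Motzkin paths of length n all of whose maximal upward-runs, downward-runs, and flat-runs have even length, satisfies 1 + (x-1)(x+1)P + x^4 P^2 = 0 as formal power series over ℤ. -/

import Mathlib

inductive Step : Type
  | U : Step
  | D : Step
  | F : Step
  deriving DecidableEq

open Step

/-- A Motzkin path: every prefix has at least as many `U`s as `D`s,
and the whole word has equally many `U`s and `D`s. -/
def IsMotzkin (w : List Step) : Prop :=
  (∀ p : List Step, p <+: w → p.count D ≤ p.count U) ∧ w.count U = w.count D

/-- The number of Motzkin paths of length `n`. -/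
noncomputable def motzkinNum (n : ℕ) : ℕ :=
  Nat.card {w : List Step // w.length = n ∧ IsMotzkin w}

/-- The word `w` contains a maximal run of the letter `s` of length exactly `k`. -/
def HasRun (w : List Step) (s : Step) (k : ℕ) : Prop :=
  ∃ a b : List Step,
    w = a ++ List.replicate k s ++ b ∧ a.getLast? ≠ some s ∧ b.head? ≠ some s

/-- Every maximal run of `U`s, of `D`s, and of `F`s in `w` has even length. -/
def AllRunsEven (w : List Step) : Prop :=
  ∀ k : ℕ, Odd k → ¬ HasRun w U k ∧ ¬ HasRun w D k ∧ ¬ HasRun w F k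

instance : Fintype Step :=
  ⟨{Step.U, Step.D, Step.F}, by intro x; cases x <;> simp⟩

/-- Motzkin numbers by recurrence. -/
def mz : ℕ → ℕ
  | 0 => 1
  | n + 1 => mz n + ∑ i : Fin n, mz i * mz (n - 1 - i)

theorem mz_zero : mz 0 = 1 := by rw [mz]

theorem mz_succ (n : ℕ) : mz (n + 1) = mz n + ∑ i : Fin n, mz i * mz (n - 1 - i) := by rw [mz]

instance finite_aux (n : ℕ) (P : List Step → Prop) :
    Finite {w : List Step // w.length = n ∧ P w} := by
  haveI : Finite {l : List Step // l.length = n} := Finite.of_fintype (List.Vector Step n)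
  exact Finite.of_injective
    (fun x => (⟨x.1, x.2.1⟩ : {l : List Step // l.length = n}))
    (by rintro ⟨a, b⟩ ⟨c, d⟩ h; simpa [Subtype.ext_iff] using h)

theorem isMotzkin_nil : IsMotzkin [] :=
  ⟨fun p hp => by simp [List.prefix_nil.mp hp], rfl⟩

theorem isMotzkin_cons_F {w : List Step} : IsMotzkin (F :: w) ↔ IsMotzkin w := by
  constructor
  · rintro ⟨h1, h2⟩
    refine ⟨fun p hp => ?_, ?_⟩
    · have := h1 (F :: p) (by simpa using hp)
      simpa using this
    · simpa using h2
  · rintro ⟨h1, h2⟩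
    refine ⟨fun p hp => ?_, ?_⟩
    · rcases p with _ | ⟨s, p⟩
      · simp
      · rw [List.cons_prefix_cons] at hp
        obtain ⟨rfl, hp⟩ := hp
        simpa using h1 p hp
    · simpa using h2

theorem prefix_append_cases {α} {r l1 l2 : List α} (h : r <+: l1 ++ l2) :
    r <+: l1 ∨ ∃ r', r = l1 ++ r' ∧ r' <+: l2 := by
  rcases le_or_gt r.length l1.length with hle | hlt
  · exact Or.inl (List.prefix_of_prefix_length_le h (l1.prefix_append l2) hle)
  · right
    have h2 : l1 <+: r := List.prefix_of_prefix_length_le (l1.prefix_append l2) h hlt.le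
    obtain ⟨r', rfl⟩ := h2
    exact ⟨r', rfl, (List.prefix_append_right_inj l1).mp h⟩

theorem isMotzkin_U_app {w1 w2 : List Step} (h1 : IsMotzkin w1) (h2 : IsMotzkin w2) :
    IsMotzkin (U :: w1 ++ D :: w2) := by
  obtain ⟨h1p, h1t⟩ := h1
  obtain ⟨h2p, h2t⟩ := h2
  constructor
  · intro p hp
    rcases p with _ | ⟨s, p⟩
    · simp
    · rw [List.cons_append, List.cons_prefix_cons] at hp
      obtain ⟨rfl, hp⟩ := hp
      rcases prefix_append_cases hp with hc | ⟨r', rfl, hr'⟩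
      · have := h1p p hc
        simp [List.count_cons]
        omega
      · rcases r' with _ | ⟨s, r''⟩
        · have := h1p w1 List.prefix_rfl
          simp [List.count_cons, List.count_append]
          omega
        · rw [List.cons_prefix_cons] at hr'
          obtain ⟨rfl, hr''⟩ := hr'
          have := h2p r'' hr''
          simp [List.count_cons, List.count_append]
          omega
  · simp [List.count_cons, List.count_append, List.cons_append]
    omega

/-- existence of a first-return split for a word with more `D`s than `U`s. -/
theorem exists_split (t : List Step) (h : t.count U < t.count D) :
    ∃ p q, t = p ++ D :: q ∧ p.count U = p.count D ∧ ∀ r, r <+: p → r.count D ≤ r.count U := by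
  have hex : ∃ m, ((t.take (m + 1)).count U < (t.take (m + 1)).count D) := by
    refine ⟨t.length, ?_⟩
    rwa [List.take_of_length_le (by omega)]
  classical
  set m0 := Nat.find hex with hm0
  have hspec := Nat.find_spec hex
  have hmin : ∀ j, j < m0 → ¬ ((t.take (j + 1)).count U < (t.take (j + 1)).count D) :=
    fun j hj => Nat.find_min hex hj
  -- p := take m0, prefix condition
  have hpre : ∀ r : List Step, r <+: t.take m0 → r.count D ≤ r.count U := by
    intro r hr
    have hreq : r = t.take r.length :=
      List.prefix_iff_eq_take.mp (hr.trans (List.take_prefix _ _))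
    rcases Nat.eq_zero_or_pos r.length with h0 | h0
    · rw [List.length_eq_zero_iff.mp h0]; simp
    · have hrlen : r.length ≤ m0 := by
        have h1 := hr.length_le
        simp only [List.length_take] at h1
        omega
      have hm := hmin (r.length - 1) (by omega)
      have he : r.length - 1 + 1 = r.length := by omega
      rw [he] at hm
      rw [hreq]
      omega
  -- m0 < t.length
  have hm0lt : m0 < t.length := by
    by_contra hcon
    push_neg at hcon
    have h1 : t.take m0 = t := List.take_of_length_le hcon
    have h2 := hpre t (by rw [h1])
    omega
  -- the element at m0 is D and balance holds
  have htake : t.take (m0 + 1) = t.take m0 ++ [t.get ⟨m0, hm0lt⟩] := by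
    rw [List.take_succ, List.getElem?_eq_getElem hm0lt]
    simp
  have hple := hpre (t.take m0) List.prefix_rfl
  have hsD : t.get ⟨m0, hm0lt⟩ = D ∧ (t.take m0).count U = (t.take m0).count D := by
    rw [htake] at hspec
    simp only [List.count_append] at hspec
    cases hget : t.get ⟨m0, hm0lt⟩ <;> rw [hget] at hspec <;>
      simp [List.count_cons] at hspec <;>
      first
        | exact absurd hple (by omega)
        | exact ⟨rfl, by omega⟩
  refine ⟨t.take m0, t.drop (m0 + 1), ?_, hsD.2, hpre⟩
  conv_lhs => rw [← List.take_append_drop (m0 + 1) t]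
  rw [htake, hsD.1]
  simp

theorem motzkin_cons_U {t : List Step} (h : IsMotzkin (U :: t)) :
    ∃ w1 w2, t = w1 ++ D :: w2 ∧ IsMotzkin w1 ∧ IsMotzkin w2 := by
  obtain ⟨hp, ht⟩ := h
  have hcount : t.count U < t.count D := by
    simp [List.count_cons] at ht
    omega
  obtain ⟨p, q, rfl, hbal, hpre⟩ := exists_split t hcount
  refine ⟨p, q, rfl, ⟨hpre, hbal⟩, ⟨?_, ?_⟩⟩
  · intro r hr
    have hq := hp (U :: p ++ D :: r) ?_
    · simp [List.count_cons, List.count_append] at hq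
      omega
    · rw [List.cons_append, List.cons_prefix_cons]
      exact ⟨rfl, (List.prefix_append_right_inj p).mpr (by
        rw [List.cons_prefix_cons]; exact ⟨rfl, hr⟩)⟩
  · simp [List.count_cons, List.count_append] at ht
    omega

theorem split_unique_aux {w1 w1' w2 w2' : List Step} (h1 : IsMotzkin w1) (h1' : IsMotzkin w1')
    (hlen : w1.length ≤ w1'.length) (he : w1 ++ D :: w2 = w1' ++ D :: w2') : w1 = w1' := by
  have hp : w1 <+: w1' := by
    refine List.prefix_of_prefix_length_le (l₃ := w1 ++ D :: w2) (w1.prefix_append _) ?_ hlen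
    rw [he]; exact w1'.prefix_append _
  obtain ⟨t, rfl⟩ := hp
  rcases t with _ | ⟨s, t'⟩
  · simp
  · rw [List.append_assoc] at he
    have h2 := List.append_cancel_left he
    rw [List.cons_append] at h2
    injection h2 with hs _
    subst hs
    exfalso
    have hq := h1'.1 (w1 ++ [D]) ⟨t', by simp⟩
    have hb := h1.2
    simp [List.count_append, List.count_cons] at hq
    omega

theorem split_unique {w1 w1' w2 w2' : List Step} (h1 : IsMotzkin w1) (h1' : IsMotzkin w1')
    (he : w1 ++ D :: w2 = w1' ++ D :: w2') : w1 = w1' ∧ w2 = w2' := by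
  have heq : w1 = w1' := by
    rcases le_total w1.length w1'.length with hl | hl
    · exact split_unique_aux h1 h1' hl he
    · exact (split_unique_aux h1' h1 hl he.symm).symm
  subst heq
  have := List.append_cancel_left he
  injection this with _ h
  exact ⟨rfl, h⟩

theorem nat_card_sigma {n : ℕ} (γ : Fin n → Type) [∀ i, Finite (γ i)] :
    Nat.card ((i : Fin n) × γ i) = ∑ i : Fin n, Nat.card (γ i) := by
  letI : ∀ i, Fintype (γ i) := fun i => Fintype.ofFinite _
  simp [Nat.card_eq_fintype_card, Fintype.card_sigma]

def gmap (n : ℕ) :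
    ({w : List Step // w.length = n ∧ IsMotzkin w} ⊕
      (i : Fin n) × ({w : List Step // w.length = (i : ℕ) ∧ IsMotzkin w} ×
        {w : List Step // w.length = n - 1 - (i : ℕ) ∧ IsMotzkin w})) →
    {w : List Step // w.length = n + 1 ∧ IsMotzkin w}
  | .inl v => ⟨F :: v.1, by simp [v.2.1], isMotzkin_cons_F.mpr v.2.2⟩
  | .inr ⟨i, x⟩ => ⟨U :: x.1.1 ++ D :: x.2.1, by
      have hi := i.isLt
      have h1 := x.1.2.1
      have h2 := x.2.2.1
      simp [List.length_append, h1, h2]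
      omega, isMotzkin_U_app x.1.2.2 x.2.2.2⟩

theorem gmap_bijective (n : ℕ) : Function.Bijective (gmap n) := by
  constructor
  · rintro (⟨v, hv1, hv2⟩ | ⟨i, ⟨⟨w1, hw1, hm1⟩, ⟨w2, hw2, hm2⟩⟩⟩)
      (⟨v', hv1', hv2'⟩ | ⟨i', ⟨⟨w1', hw1', hm1'⟩, ⟨w2', hw2', hm2'⟩⟩⟩) he <;>
      rw [Subtype.ext_iff] at he <;> simp only [gmap] at he
    · injection he with h1 h2
      subst h2
      rfl
    · rw [List.cons_append] at he
      injection he with h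
      exact absurd h (by simp)
    · rw [List.cons_append] at he
      injection he with h
      exact absurd h (by simp)
    · rw [List.cons_append, List.cons_append] at he
      injection he with h1 h2
      obtain ⟨rfl, rfl⟩ := split_unique hm1 hm1' h2
      obtain rfl : i = i' := Fin.ext (by omega)
      rfl
  · rintro ⟨w, hlen, hm⟩
    rcases w with _ | ⟨s, t⟩
    · simp at hlen
    rcases s with _ | _ | _
    · obtain ⟨w1, w2, rfl, hm1, hm2⟩ := motzkin_cons_U hm
      have hl : w1.length + w2.length + 2 = n + 1 := by
        simp [List.length_append] at hlen
        omega
      have hi : w1.length < n := by omega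
      exact ⟨.inr ⟨⟨w1.length, hi⟩, ⟨⟨w1, rfl, hm1⟩, ⟨w2, by show w2.length = n - 1 - w1.length; omega, hm2⟩⟩⟩, Subtype.ext rfl⟩
    · exact absurd (hm.1 [D] ⟨t, rfl⟩) (by simp [List.count_cons])
    · exact ⟨.inl ⟨t, by simpa using hlen, isMotzkin_cons_F.mp hm⟩, Subtype.ext rfl⟩

theorem motzkinNum_zero : motzkinNum 0 = 1 := by
  rw [motzkinNum]
  haveI : Unique {w : List Step // w.length = 0 ∧ IsMotzkin w} := by
    refine ⟨⟨⟨[], rfl, isMotzkin_nil⟩⟩, ?_⟩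
    rintro ⟨w, hw, -⟩
    exact Subtype.ext (List.length_eq_zero_iff.mp hw)
  exact Nat.card_unique

theorem motzkinNum_succ (n : ℕ) :
    motzkinNum (n + 1) =
      motzkinNum n + ∑ i : Fin n, motzkinNum i * motzkinNum (n - 1 - i) := by
  have hcard := Nat.card_congr (Equiv.ofBijective _ (gmap_bijective n))
  rw [motzkinNum, ← hcard, Nat.card_sum, nat_card_sigma]
  congr 1
  exact Finset.sum_congr rfl fun i _ => Nat.card_prod _ _

theorem motzkinNum_eq (n : ℕ) : motzkinNum n = mz n := by
  induction n using Nat.strong_induction_on with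
  | _ n ih =>
    rcases n with _ | n
    · rw [motzkinNum_zero, mz_zero]
    · rw [motzkinNum_succ, mz_succ, ih n (by omega)]
      congr 1
      refine Finset.sum_congr rfl fun i _ => ?_
      rw [ih i (by omega), ih (n - 1 - (i : ℕ)) (by omega)]

def dbl : List Step → List Step
  | [] => []
  | s :: t => s :: s :: dbl t

@[simp] theorem dbl_nil : dbl [] = [] := rfl

@[simp] theorem dbl_cons (s : Step) (t : List Step) : dbl (s :: t) = s :: s :: dbl t := rfl

theorem dbl_length (w : List Step) : (dbl w).length = 2 * w.length := by
  induction w with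
  | nil => simp
  | cons s t ih => simp [ih]; omega

theorem dbl_count (c : Step) (w : List Step) : (dbl w).count c = 2 * w.count c := by
  induction w with
  | nil => simp
  | cons s t ih => simp [List.count_cons, ih]; omega

theorem dbl_append (a b : List Step) : dbl (a ++ b) = dbl a ++ dbl b := by
  induction a with
  | nil => simp
  | cons s t ih => simp [ih]

theorem dbl_injective : Function.Injective dbl := by
  intro a
  induction a with
  | nil =>
    intro b h
    cases b with
    | nil => rfl
    | cons x y => simp at h
  | cons s t ih =>
    intro b h
    cases b with
    | nil => simp at h
    | cons s' t' =>
      simp only [dbl_cons, List.cons.injEq] at h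
      obtain ⟨rfl, -, h⟩ := h
      rw [ih h]

theorem dbl_prefix {p v : List Step} (h : p <+: dbl v) :
    (∃ q, q <+: v ∧ p = dbl q) ∨ (∃ q s, q ++ [s] <+: v ∧ p = dbl q ++ [s]) := by
  induction v generalizing p with
  | nil =>
    rw [dbl_nil, List.prefix_nil] at h
    exact Or.inl ⟨[], by simp [h]⟩
  | cons s t ihv =>
    rcases p with _ | ⟨a, p⟩
    · exact Or.inl ⟨[], by simp⟩
    rw [dbl_cons, List.cons_prefix_cons] at h
    obtain ⟨rfl, h⟩ := h
    rcases p with _ | ⟨b, p⟩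
    · exact Or.inr ⟨[], a, by simp, by simp⟩
    rw [List.cons_prefix_cons] at h
    obtain ⟨rfl, h⟩ := h
    rcases ihv h with ⟨q, hq, rfl⟩ | ⟨q, c, hq, rfl⟩
    · exact Or.inl ⟨b :: q, by simp [List.cons_prefix_cons, hq]⟩
    · exact Or.inr ⟨b :: q, c, by simp [List.cons_prefix_cons, hq], by simp⟩

theorem isMotzkin_dbl {v : List Step} : IsMotzkin (dbl v) ↔ IsMotzkin v := by
  constructor
  · rintro ⟨h1, h2⟩
    refine ⟨fun q hq => ?_, ?_⟩
    · obtain ⟨r, rfl⟩ := hq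
      have := h1 (dbl q) ⟨dbl r, (dbl_append q r).symm⟩
      rw [dbl_count, dbl_count] at this
      omega
    · rw [dbl_count, dbl_count] at h2
      omega
  · rintro ⟨h1, h2⟩
    refine ⟨fun p hp => ?_, ?_⟩
    · rcases dbl_prefix hp with ⟨q, hq, rfl⟩ | ⟨q, s, hq, rfl⟩
      · have := h1 q hq
        rw [dbl_count, dbl_count]
        omega
      · have hqs := h1 (q ++ [s]) hq
        have hqv := h1 q ((q.prefix_append [s]).trans hq)
        rcases s with _ | _ | _ <;>
          simp [List.count_append, List.count_cons, dbl_count] at * <;> omega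
    · rw [dbl_count, dbl_count, h2]

def AllRunsEven' (w : List Step) : Prop :=
  ∀ c k, Odd k → ¬ HasRun w c k

theorem allRunsEven_iff {w : List Step} : AllRunsEven w ↔ AllRunsEven' w := by
  constructor
  · intro h c k hk
    rcases c with _ | _ | _
    exacts [(h k hk).1, (h k hk).2.1, (h k hk).2.2]
  · intro h k hk
    exact ⟨h U k hk, h D k hk, h F k hk⟩

theorem allRunsEven'_nil : AllRunsEven' [] := by
  rintro c k hk ⟨a, b, he, -, -⟩
  have h1 := congrArg List.length he
  have h2 := hk.pos
  simp [List.length_replicate] at h1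
  omega

theorem hasRun_cons_cons {s c : Step} {t : List Step} {k : ℕ} (hk : Odd k)
    (h : HasRun (s :: s :: t) c k) : ∃ k', Odd k' ∧ HasRun t c k' := by
  obtain ⟨a, b, he, hla, hhb⟩ := h
  have hk1 : 1 ≤ k := hk.pos
  rcases a with _ | ⟨x, a'⟩
  · -- a = []
    rcases Nat.lt_or_ge k 2 with h2 | h2
    · -- k = 1
      obtain rfl : k = 1 := by omega
      simp only [List.nil_append, List.replicate_one, List.cons_append,
        List.nil_append] at he
      injection he with h1 h2
      subst h1
      rw [← h2] at hhb
      simp at hhb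
    · -- k ≥ 2
      obtain ⟨k', rfl⟩ : ∃ k', k = k' + 2 := ⟨k - 2, by omega⟩
      rw [show k' + 2 = k' + 1 + 1 from rfl] at he
      simp only [List.nil_append, List.replicate_succ, List.cons_append] at he
      injection he with h1 h2
      injection h2 with h3 h4
      subst h1
      refine ⟨k', by rcases hk with ⟨m, hm⟩; exact ⟨m - 1, by omega⟩, [], b, ?_, by simp, hhb⟩
      simpa using h4
  · rcases a' with _ | ⟨y, a''⟩
    · -- a = [x]
      exfalso
      simp only [List.cons_append, List.nil_append] at he
      injection he with h1 h2
      subst h1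
      have hsc : s = c := by
        obtain ⟨k'', rfl⟩ : ∃ k'', k = k'' + 1 := ⟨k - 1, by omega⟩
        rw [List.replicate_succ, List.cons_append] at h2
        injection h2 with h3 h4
      simp [hsc] at hla
    · -- a = x :: y :: a''
      simp only [List.cons_append] at he
      injection he with h1 h2
      injection h2 with h3 h4
      refine ⟨k, hk, a'', b, h4, ?_, hhb⟩
      rcases a'' with _ | ⟨z, a'''⟩
      · simp
      · rw [List.getLast?_cons_cons, List.getLast?_cons_cons] at hla
        exact hla

theorem hasRun_of_cons_cons {s c : Step} {t : List Step} {k : ℕ} (hk : Odd k)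
    (h : HasRun t c k) : ∃ k', Odd k' ∧ HasRun (s :: s :: t) c k' := by
  obtain ⟨a, b, he, hla, hhb⟩ := h
  rcases a with _ | ⟨x, a'⟩
  · -- a = []
    by_cases hsc : s = c
    · subst hsc
      refine ⟨k + 2, by rcases hk with ⟨m, hm⟩; exact ⟨m + 1, by omega⟩, [], b, ?_, by simp, hhb⟩
      simp only [List.nil_append] at he ⊢
      rw [show k + 2 = k + 1 + 1 from rfl, List.replicate_succ, List.replicate_succ]
      simp [he]
    · refine ⟨k, hk, [s, s], b, ?_, ?_, hhb⟩
      · simp only [List.nil_append] at he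
        simp [he]
      · simp [hsc]
  · -- a = x :: a'
    refine ⟨k, hk, s :: s :: x :: a', b, by simp [he], ?_, hhb⟩
    rw [List.getLast?_cons_cons, List.getLast?_cons_cons]
    exact hla

theorem allRunsEven'_cons_cons {s : Step} {t : List Step} :
    AllRunsEven' (s :: s :: t) ↔ AllRunsEven' t := by
  constructor
  · intro h c k hk hr
    obtain ⟨k', hk', hr'⟩ := hasRun_of_cons_cons (s := s) hk hr
    exact h c k' hk' hr'
  · intro h c k hk hr
    obtain ⟨k', hk', hr'⟩ := hasRun_cons_cons hk hr
    exact h c k' hk' hr'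

theorem dbl_of_aux (n : ℕ) :
    ∀ w : List Step, w.length ≤ n → AllRunsEven' w → ∃ v, dbl v = w := by
  induction n with
  | zero =>
    intro w hw _
    rw [List.length_eq_zero_iff.mp (Nat.le_zero.mp hw)]
    exact ⟨[], rfl⟩
  | succ n ihn =>
    intro w hw h
    rcases w with _ | ⟨x, t⟩
    · exact ⟨[], rfl⟩
    rcases t with _ | ⟨y, t'⟩
    · exact ((h x 1 odd_one) ⟨[], [], by simp, by simp, by simp⟩).elim
    by_cases hxy : y = x
    · subst hxy
      obtain ⟨v', hv'⟩ := ihn t' (by simp at hw ⊢; omega) (allRunsEven'_cons_cons.mp h)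
      exact ⟨y :: v', by simp [hv']⟩
    · exact ((h x 1 odd_one) ⟨[], y :: t', by simp, by simp, by simp [hxy]⟩).elim

theorem allRunsEven'_iff_dbl {w : List Step} : AllRunsEven' w ↔ ∃ v, dbl v = w := by
  constructor
  · intro h
    exact dbl_of_aux w.length w le_rfl h
  · rintro ⟨v, rfl⟩
    induction v with
    | nil => exact allRunsEven'_nil
    | cons s t ih => exact (allRunsEven'_cons_cons (s := s)).mpr ih

noncomputable def aNum (n : ℕ) : ℕ :=
  Nat.card {w : List Step // w.length = n ∧ IsMotzkin w ∧ AllRunsEven w}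

theorem aNum_eq (n : ℕ) : aNum n = if n % 2 = 0 then mz (n / 2) else 0 := by
  rcases Nat.even_or_odd n with ⟨m, rfl⟩ | ⟨m, rfl⟩
  · rw [aNum]
    have hbij : Function.Bijective (fun v : {v : List Step // v.length = m ∧ IsMotzkin v} =>
        (⟨dbl v.1, by rw [dbl_length, v.2.1]; omega,
          isMotzkin_dbl.mpr v.2.2,
          allRunsEven_iff.mpr (allRunsEven'_iff_dbl.mpr ⟨v.1, rfl⟩)⟩ :
          {w : List Step // w.length = m + m ∧ IsMotzkin w ∧ AllRunsEven w})) := by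
      constructor
      · rintro ⟨v, hv⟩ ⟨v', hv'⟩ h
        rw [Subtype.ext_iff] at h
        exact Subtype.ext (dbl_injective h)
      · rintro ⟨w, hlen, hm, hre⟩
        obtain ⟨v, rfl⟩ := allRunsEven'_iff_dbl.mp (allRunsEven_iff.mp hre)
        have hvl : v.length = m := by rw [dbl_length] at hlen; omega
        exact ⟨⟨v, hvl, isMotzkin_dbl.mp hm⟩, rfl⟩
    rw [← Nat.card_congr (Equiv.ofBijective _ hbij)]
    have h2 : (m + m) % 2 = 0 := by omega
    have h3 : (m + m) / 2 = m := by omega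
    rw [h2, h3, ← motzkinNum_eq, motzkinNum]
    simp
  · have he : IsEmpty {w : List Step // w.length = 2 * m + 1 ∧ IsMotzkin w ∧ AllRunsEven w} := by
      refine ⟨?_⟩
      rintro ⟨w, hlen, hm, hre⟩
      obtain ⟨v, rfl⟩ := allRunsEven'_iff_dbl.mp (allRunsEven_iff.mp hre)
      rw [dbl_length] at hlen
      omega
    rw [aNum, Nat.card_of_isEmpty, if_neg (by omega)]

theorem conv_even (r : ℕ) :
    ∑ ij ∈ Finset.HasAntidiagonal.antidiagonal (2 * r), (aNum ij.1 : ℤ) * (aNum ij.2 : ℤ)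
      = ∑ ij ∈ Finset.HasAntidiagonal.antidiagonal r, (mz ij.1 : ℤ) * (mz ij.2 : ℤ) := by
  classical
  have hemb : Function.Injective (fun p : ℕ × ℕ => (2 * p.1, 2 * p.2)) := by
    rintro ⟨a, b⟩ ⟨c, d⟩ h
    simp only [Prod.mk.injEq] at h ⊢
    omega
  have hsub : (Finset.HasAntidiagonal.antidiagonal r).map ⟨_, hemb⟩ ⊆ Finset.HasAntidiagonal.antidiagonal (2 * r) := by
    intro x hx
    simp only [Finset.mem_map, Finset.mem_antidiagonal, Function.Embedding.coeFn_mk] at hx ⊢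
    obtain ⟨⟨a, b⟩, hab, rfl⟩ := hx
    simp at hab ⊢
    omega
  rw [← Finset.sum_subset hsub ?_]
  · rw [Finset.sum_map]
    refine Finset.sum_congr rfl fun ij hij => ?_
    simp only [Function.Embedding.coeFn_mk]
    rw [aNum_eq, aNum_eq]
    simp [Nat.mul_div_cancel_left, Nat.mul_mod_right]
  · intro x hx hnx
    by_cases h1 : x.1 % 2 = 0
    · exfalso
      apply hnx
      rw [Finset.HasAntidiagonal.mem_antidiagonal] at hx
      rw [Finset.mem_map]
      refine ⟨(x.1 / 2, x.2 / 2), ?_, ?_⟩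
      · rw [Finset.HasAntidiagonal.mem_antidiagonal]; omega
      · simp only [Function.Embedding.coeFn_mk]
        have : x.2 % 2 = 0 := by omega
        ext <;> simp <;> omega
    · rw [aNum_eq]
      rw [if_neg h1]
      simp

theorem conv_fin (k : ℕ) :
    ∑ ij ∈ Finset.HasAntidiagonal.antidiagonal k, (mz ij.1 : ℤ) * (mz ij.2 : ℤ)
      = ((∑ i : Fin (k + 1), mz i * mz (k - i) : ℕ) : ℤ) := by
  rw [Finset.Nat.sum_antidiagonal_eq_sum_range_succ (fun i j => (mz i : ℤ) * (mz j : ℤ)) k]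
  push_cast
  rw [Finset.sum_range fun i => (mz i : ℤ) * (mz (k - i) : ℤ)]

theorem key (n : ℕ) :
    (if n = 0 then (1 : ℤ) else 0)
      + ((if 2 ≤ n then (aNum (n - 2) : ℤ) else 0) - (aNum n : ℤ))
      + (if 4 ≤ n then
          ∑ ij ∈ Finset.HasAntidiagonal.antidiagonal (n - 4), (aNum ij.1 : ℤ) * (aNum ij.2 : ℤ)
        else 0) = 0 := by
  by_cases h1 : n % 2 = 1
  · have ha : (aNum n : ℤ) = 0 := by rw [aNum_eq, if_neg (by omega)]; simp
    have hb : (if 2 ≤ n then (aNum (n - 2) : ℤ) else 0) = 0 := by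
      split_ifs with h
      · rw [aNum_eq, if_neg (by omega)]; simp
      · rfl
    have hc : (if 4 ≤ n then
          ∑ ij ∈ Finset.HasAntidiagonal.antidiagonal (n - 4), (aNum ij.1 : ℤ) * (aNum ij.2 : ℤ)
        else (0 : ℤ)) = 0 := by
      split_ifs with h
      · refine Finset.sum_eq_zero fun ij hij => ?_
        rw [Finset.HasAntidiagonal.mem_antidiagonal] at hij
        by_cases hi : ij.1 % 2 = 1
        · rw [aNum_eq ij.1, if_neg (by omega)]
          simp
        · rw [aNum_eq ij.2, if_neg (by omega)]
          simp
      · rfl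
    rw [ha, hb, hc, if_neg (by omega)]
    ring
  · obtain ⟨m, rfl⟩ : ∃ m, n = 2 * m := ⟨n / 2, by omega⟩
    rcases m with _ | _ | m
    · norm_num
      rw [aNum_eq]
      norm_num [mz_zero]
    · rw [if_neg (by omega), if_pos (by omega), if_neg (by omega)]
      rw [show 2 * 1 - 2 = 0 from rfl]
      rw [aNum_eq, aNum_eq]
      norm_num [mz_zero, mz_succ]
    · rw [if_neg (by omega), if_pos (by omega), if_pos (by omega)]
      have e1 : 2 * (m + 2) - 2 = 2 * (m + 1) := by omega
      have e2 : 2 * (m + 2) - 4 = 2 * m := by omega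
      rw [e1, e2, conv_even, conv_fin]
      rw [aNum_eq, aNum_eq]
      rw [if_pos (by omega), if_pos (by omega)]
      rw [show 2 * (m + 1) / 2 = m + 1 from by omega,
        show 2 * (m + 2) / 2 = m + 2 from by omega]
      rw [mz_succ (m + 1)]
      simp only [Nat.add_sub_cancel]
      push_cast
      ring

open PowerSeries in
theorem motzkin_even_runs_gf :
    1 + ((X : ℤ⟦X⟧) - 1) * (X + 1) *
        (PowerSeries.mk fun n =>
          (Nat.card {w : List Step // w.length = n ∧ IsMotzkin w ∧ AllRunsEven w} : ℤ)) +
      X ^ 4 *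
        (PowerSeries.mk fun n =>
          (Nat.card {w : List Step // w.length = n ∧ IsMotzkin w ∧ AllRunsEven w} : ℤ)) ^ 2 = 0 := by
  have hP : (PowerSeries.mk fun n =>
      (Nat.card {w : List Step // w.length = n ∧ IsMotzkin w ∧ AllRunsEven w} : ℤ)) =
      PowerSeries.mk fun n => (aNum n : ℤ) := rfl
  rw [hP]
  set P := PowerSeries.mk fun n => (aNum n : ℤ) with hPdef
  have hfac : 1 + ((X : ℤ⟦X⟧) - 1) * (X + 1) * P + X ^ 4 * P ^ 2 =
      1 + (X ^ 2 * P - P) + X ^ 4 * P ^ 2 := by ring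
  rw [hfac, PowerSeries.ext_iff]
  intro n
  rw [map_add, map_add, map_sub, map_zero, PowerSeries.coeff_one,
    PowerSeries.coeff_X_pow_mul', PowerSeries.coeff_X_pow_mul', pow_two P,
    PowerSeries.coeff_mul]
  simp only [PowerSeries.coeff_mk, hPdef]
  exact key n
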